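/- Let q and N be nonnegative integers and n a positive integer. Then for all x ∈ (0,1), (2n+N+q) · x(1−x²) · R′_{N,n}(x) = ( N(2n+N+q) + 2n² − (2n+N)(2n+N+q)x² ) · R_{N,n}(x) + 2n(n+N+q) · R_{N,n−1}(x), where R′_{N,n} denotes the derivative of R_{N,n}. -/

import Mathlib

open Finset

/-- The radial Zernike polynomial `R_{N,n}` in dimension `p + 2` with `p = 2q`. -/
noncomputable def zernikeR (q N n : ℕ) (x : ℝ) : ℝ :=
  x ^ N * ∑ k ∈ Finset.range (n + 1),
    (-1 : ℝ) ^ k * (Nat.choose (n + N + q) k : ℝ) * (Nat.choose n k : ℝ) *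
      x ^ (2 * (n - k)) * (1 - x ^ 2) ^ k


noncomputable def zco (m n k : ℕ) : ℝ := (-1)^k * (m.choose k) * (n.choose k)

lemma zco_zero (m n k : ℕ) (h : n < k) : zco m n k = 0 := by
  simp [zco, Nat.choose_eq_zero_of_lt h]

lemma realabs (n k : ℕ) :
    ((k:ℝ)+1) * (n.choose (k+1) : ℝ) = ((n:ℝ) - (k:ℝ)) * (n.choose k : ℝ) := by
  rcases lt_or_ge k n with h | h
  · have h1 := Nat.choose_succ_right_eq n k
    have h2 := congrArg (Nat.cast (R := ℝ)) h1
    push_cast [Nat.cast_sub h.le] at h2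
    linarith
  · rcases eq_or_lt_of_le h with rfl | h2
    · simp [Nat.choose_succ_self]
    · rw [Nat.choose_eq_zero_of_lt (by omega), Nat.choose_eq_zero_of_lt h2]
      simp

lemma realabs2 (n k : ℕ) (hn : 1 ≤ n) :
    (n:ℝ) * ((n-1).choose k : ℝ) = ((n:ℝ) - (k:ℝ)) * (n.choose k : ℝ) := by
  obtain ⟨n', rfl⟩ : ∃ n', n = n'+1 := ⟨n-1, by omega⟩
  have h1 := Nat.add_one_mul_choose_eq n' k
  have h2 := congrArg (Nat.cast (R := ℝ)) h1
  have h3 := realabs (n'+1) k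
  simp only [Nat.add_sub_cancel]
  push_cast at h2 h3 ⊢
  linear_combination h2 + h3

lemma core (nn M N k s p0 p1 p2 P0 P1 P2 v0 v1 v2 V0 V1 V2 : ℝ)
    (R1 : nn*v0 = (nn-k)*p0) (R2 : nn*v1 = (nn-k-1)*p1) (R3 : nn*v2 = (nn-k-2)*p2)
    (R4 : M*V0 = (M-k)*P0) (R5 : M*V1 = (M-k-1)*P1) (R6 : M*V2 = (M-k-2)*P2)
    (R7 : (k+2)*p2 = (nn-k-1)*p1) (R8 : (k+1)*p1 = (nn-k)*p0)
    (R9 : (k+2)*P2 = (M-k-1)*P1) (R10 : (k+1)*P1 = (M-k)*P0) :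
    (nn+M)*(N+2*(nn-1-k))*(-s*(P1*p1)) - 2*(nn+M)*(k+2)*(s*(P2*p2))
      = (N*(nn+M)+2*nn^2 - (2*nn+N)*(nn+M))*(s*(P2*p2))
        + (N*(nn+M)+2*nn^2)*(-s*(P1*p1))
        + 2*nn*M*(s*(V2*v2) - 2*(s*(V1*v1)) + s*(V0*v0)) := by
  have E2 : 2*nn*M*(V2*v2) = 2*((nn-k-2)*(M-k-2))*(p2*P2) := by
    linear_combination (2*M*V2)*R3 + (2*((nn-k-2)*p2))*R6
  have E1 : 2*nn*M*(V1*v1) = 2*((nn-k-1)*(M-k-1))*(p1*P1) := by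
    linear_combination (2*M*V1)*R2 + (2*((nn-k-1)*p1))*R5
  have E0 : 2*nn*M*(V0*v0) = 2*((k+1)^2)*(p1*P1) := by
    linear_combination (2*M*V0)*R1 + (2*((nn-k)*p0))*R4 + (-2*(k+1)*P1)*R8 + (-2*((nn-k)*p0))*R10
  have E3 : 2*((k+2)^2)*(p2*P2) = 2*((nn-k-1)*(M-k-1))*(p1*P1) := by
    linear_combination (2*(k+2)*P2)*R7 + (2*((nn-k-1)*p1))*R9
  linear_combination (-s)*E2 + (2*s)*E1 + (-s)*E0 + (-s)*E3

lemma hterm (x w cc ar : ℝ) (e k : ℕ) :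
    ar*(x*w)*(cc*((e:ℝ)*x^(e-1)*w^k + x^e*((k:ℝ)*w^(k-1)*(-(2*x)))))
      = ar*(e:ℝ)*cc*(x^e*w^(k+1)) - 2*ar*(k:ℝ)*cc*((x^e*x^2)*w^k) := by
  cases e <;> cases k <;> push_cast <;> simp [pow_succ] <;> ring

lemma zernikeR_eq (q N n : ℕ) (x : ℝ) :
    zernikeR q N n x
      = ∑ k ∈ range (n+1), zco (n+N+q) n k * x^(N+2*(n-k)) * (1-x^2)^k := by
  unfold zernikeR zco
  rw [Finset.mul_sum]
  refine Finset.sum_congr rfl fun k _ => ?_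
  rw [pow_add]
  ring

lemma zern_deriv (q N n : ℕ) (x : ℝ) :
    HasDerivAt (zernikeR q N n)
      (∑ k ∈ range (n+1), zco (n+N+q) n k *
        ((N+2*(n-k) : ℕ) * x^(N+2*(n-k)-1) * (1-x^2)^k
          + x^(N+2*(n-k)) * ((k:ℝ) * (1-x^2)^(k-1) * (-(2*x))))) x := by
  have hfun : zernikeR q N n
      = fun y => ∑ k ∈ range (n+1), zco (n+N+q) n k * (y^(N+2*(n-k)) * (1-y^2)^k) := by
    funext y
    rw [zernikeR_eq]
    exact Finset.sum_congr rfl fun k _ => by ring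
  rw [hfun]
  refine HasDerivAt.fun_sum fun k _ => ?_
  have h1 : HasDerivAt (fun y : ℝ => y^(N+2*(n-k)))
      (((N+2*(n-k) : ℕ) : ℝ) * x^(N+2*(n-k)-1)) x := hasDerivAt_pow _ x
  have h0 : HasDerivAt (fun y : ℝ => 1 - y^2) (-(2*x)) x := by
    simpa using (hasDerivAt_pow 2 x).const_sub 1
  have h2 : HasDerivAt (fun y : ℝ => (1-y^2)^k)
      ((k:ℝ) * (1-x^2)^(k-1) * (-(2*x))) x := h0.pow k
  have h3 := (h1.fun_mul h2).const_mul (zco (n+N+q) n k)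
  convert h3 using 1

noncomputable def Fb (N n' : ℕ) (x : ℝ) (j : ℕ) : ℝ := x^(N+2*(n'+2-j)) * (1-x^2)^j

lemma sumshift (f : ℕ → ℝ) (M : ℕ) (h : f (M+1) = 0) :
    ∑ k ∈ range (M+1), f k = (∑ k ∈ range (M+1), f (k+1)) + f 0 := by
  rw [Finset.sum_range_succ' f M, Finset.sum_range_succ (fun k => f (k+1)) M, h, add_zero]

lemma lemA (q N n' : ℕ) (x : ℝ) :
    (2*((n':ℝ)+1)+N+q) * (x*(1-x^2)) * deriv (zernikeR q N (n'+1)) x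
      = (∑ k ∈ range (n'+1+1),
          ((2*((n':ℝ)+1)+N+q) * ((N:ℝ)+2*((n':ℝ)-k)) * zco (n'+1+N+q) (n'+1) (k+1)
            - 2*(2*((n':ℝ)+1)+N+q)*((k:ℝ)+2)*zco (n'+1+N+q) (n'+1) (k+2)) * Fb N n' x (k+2))
        + ((2*((n':ℝ)+1)+N+q) * ((N:ℝ)+2*((n':ℝ)+1)) * zco (n'+1+N+q) (n'+1) 0
            - 2*(2*((n':ℝ)+1)+N+q) * zco (n'+1+N+q) (n'+1) 1) * Fb N n' x 1 := by
  rw [(zern_deriv q N (n'+1) x).deriv, Finset.mul_sum]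
  have step1 : ∀ k ∈ range (n'+1+1),
      (2*((n':ℝ)+1)+N+q) * (x*(1-x^2)) * (zco (n'+1+N+q) (n'+1) k *
        ((N+2*(n'+1-k) : ℕ) * x^(N+2*(n'+1-k)-1) * (1-x^2)^k
          + x^(N+2*(n'+1-k)) * ((k:ℝ) * (1-x^2)^(k-1) * (-(2*x)))))
      = (2*((n':ℝ)+1)+N+q) * ((N+2*(n'+1-k) : ℕ):ℝ) * zco (n'+1+N+q) (n'+1) k * Fb N n' x (k+1)
        - 2*(2*((n':ℝ)+1)+N+q)*(k:ℝ)*zco (n'+1+N+q) (n'+1) k * Fb N n' x k := by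
    intro k hk
    have hk' : k ≤ n'+1 := by
      have := Finset.mem_range.mp hk; omega
    have e1 : N+2*(n'+2-(k+1)) = N+2*(n'+1-k) := by omega
    have e2 : N+2*(n'+2-k) = N+2*(n'+1-k)+2 := by omega
    simp only [Fb, e1, e2, pow_add]
    linear_combination hterm x (1-x^2) (zco (n'+1+N+q) (n'+1) k) (2*((n':ℝ)+1)+N+q) (N+2*(n'+1-k)) k
  rw [Finset.sum_congr rfl step1, Finset.sum_sub_distrib]
  have sh : (∑ k ∈ range (n'+1+1),
        2*(2*((n':ℝ)+1)+N+q)*(k:ℝ)*zco (n'+1+N+q) (n'+1) k * Fb N n' x k)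
      = ∑ k ∈ range (n'+1+1),
        2*(2*((n':ℝ)+1)+N+q)*((k:ℝ)+1)*zco (n'+1+N+q) (n'+1) (k+1) * Fb N n' x (k+1) := by
    rw [Finset.sum_range_succ'
      (fun k => 2*(2*((n':ℝ)+1)+N+q)*(k:ℝ)*zco (n'+1+N+q) (n'+1) k * Fb N n' x k) (n'+1)]
    rw [Finset.sum_range_succ
      (fun k => 2*(2*((n':ℝ)+1)+N+q)*((k:ℝ)+1)*zco (n'+1+N+q) (n'+1) (k+1) * Fb N n' x (k+1)) (n'+1)]
    have hz : zco (n'+1+N+q) (n'+1) (n'+1+1) = 0 := zco_zero _ _ _ (by omega)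
    rw [hz]
    push_cast
    simp
  rw [sh, ← Finset.sum_sub_distrib]
  rw [sumshift
    (fun k => (2*((n':ℝ)+1)+N+q) * ((N+2*(n'+1-k) : ℕ):ℝ) * zco (n'+1+N+q) (n'+1) k * Fb N n' x (k+1)
      - 2*(2*((n':ℝ)+1)+N+q)*((k:ℝ)+1)*zco (n'+1+N+q) (n'+1) (k+1) * Fb N n' x (k+1)) (n'+1)
    (by
      have hz1 : zco (n'+1+N+q) (n'+1) (n'+2) = 0 := zco_zero _ _ _ (by omega)
      have hz2 : zco (n'+1+N+q) (n'+1) (n'+2+1) = 0 := zco_zero _ _ _ (by omega)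
      simp only [hz1, hz2]
      ring)]
  congr 1
  · refine Finset.sum_congr rfl fun k hk => ?_
    rcases le_or_gt k n' with hk' | hk'
    · have e3 : (N+2*(n'+1-(k+1)) : ℕ) = N+2*(n'-k) := by omega
      rw [e3]
      have e4 : ((n'-k : ℕ):ℝ) = (n':ℝ) - k := by
        rw [Nat.cast_sub hk']
      push_cast [e4]
      ring
    · have hk2 : k = n'+1 := by
        have := Finset.mem_range.mp hk; omega
      subst hk2
      have hz1 : zco (n'+1+N+q) (n'+1) (n'+1+1) = 0 := zco_zero _ _ _ (by omega)
      have hz2 : zco (n'+1+N+q) (n'+1) (n'+1+2) = 0 := zco_zero _ _ _ (by omega)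
      simp only [hz1, hz2]
      ring
  · push_cast
    ring

lemma lemB' (AA BB CC : ℝ) (q N n' : ℕ) (x : ℝ) :
    (AA - BB*x^2) * (∑ k ∈ range (n'+1+1),
        zco (n'+1+N+q) (n'+1) k * x^(N+2*(n'+1-k)) * (1-x^2)^k)
      + CC * (∑ k ∈ range (n'+1), zco (n'+N+q) n' k * x^(N+2*(n'-k)) * (1-x^2)^k)
    = (∑ k ∈ range (n'+1+1),
        ((AA-BB)*zco (n'+1+N+q) (n'+1) (k+2) + AA*zco (n'+1+N+q) (n'+1) (k+1)
          + CC*(zco (n'+N+q) n' (k+2) + 2*zco (n'+N+q) n' (k+1) + zco (n'+N+q) n' k))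
          * Fb N n' x (k+2))
      + ((AA-BB)*zco (n'+1+N+q) (n'+1) 1 + AA*zco (n'+1+N+q) (n'+1) 0
          + CC*(zco (n'+N+q) n' 1 + 2*zco (n'+N+q) n' 0)) * Fb N n' x 1
      + ((AA-BB)*zco (n'+1+N+q) (n'+1) 0 + CC*zco (n'+N+q) n' 0) * Fb N n' x 0 := by
  have hpl : ∀ k : ℕ, k+1+1 = k+2 := fun _ => rfl
  have stepA : ∀ k ∈ range (n'+1+1),
      (AA - BB*x^2) * (zco (n'+1+N+q) (n'+1) k * x^(N+2*(n'+1-k)) * (1-x^2)^k)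
      = AA*(zco (n'+1+N+q) (n'+1) k * Fb N n' x k)
        + AA*(zco (n'+1+N+q) (n'+1) k * Fb N n' x (k+1))
        - BB*(zco (n'+1+N+q) (n'+1) k * Fb N n' x k) := by
    intro k hk
    have hk' : k ≤ n'+1 := by have := Finset.mem_range.mp hk; omega
    have e1 : N+2*(n'+2-(k+1)) = N+2*(n'+1-k) := by omega
    have e2 : N+2*(n'+2-k) = N+2*(n'+1-k)+2 := by omega
    simp only [Fb, e1, e2, pow_add]
    ring
  have stepC : ∀ k ∈ range (n'+1),
      CC * (zco (n'+N+q) n' k * x^(N+2*(n'-k)) * (1-x^2)^k)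
      = CC*(zco (n'+N+q) n' k * Fb N n' x k)
        + 2*CC*(zco (n'+N+q) n' k * Fb N n' x (k+1))
        + CC*(zco (n'+N+q) n' k * Fb N n' x (k+2)) := by
    intro k hk
    have hk' : k ≤ n' := by have := Finset.mem_range.mp hk; omega
    have e0 : N+2*(n'+2-(k+2)) = N+2*(n'-k) := by omega
    have e1 : N+2*(n'+2-(k+1)) = N+2*(n'-k)+2 := by omega
    have e2 : N+2*(n'+2-k) = N+2*(n'-k)+4 := by omega
    simp only [Fb, e0, e1, e2, pow_add]
    ring
  rw [Finset.mul_sum, Finset.mul_sum, Finset.sum_congr rfl stepA, Finset.sum_congr rfl stepC]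
  have T1 : ∑ k ∈ range (n'+1+1), zco (n'+1+N+q) (n'+1) k * Fb N n' x k
      = (∑ k ∈ range (n'+1+1), zco (n'+1+N+q) (n'+1) (k+2) * Fb N n' x (k+2))
        + zco (n'+1+N+q) (n'+1) 1 * Fb N n' x 1 + zco (n'+1+N+q) (n'+1) 0 * Fb N n' x 0 := by
    rw [sumshift (fun k => zco (n'+1+N+q) (n'+1) k * Fb N n' x k) (n'+1)
      (by simp [zco_zero _ _ _ (show n'+1 < n'+1+1 by omega)])]
    rw [sumshift (fun k => zco (n'+1+N+q) (n'+1) (k+1) * Fb N n' x (k+1)) (n'+1)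
      (by simp [zco_zero _ _ _ (show n'+1 < n'+1+1+1 by omega)])]
  have T2 : ∑ k ∈ range (n'+1+1), zco (n'+1+N+q) (n'+1) k * Fb N n' x (k+1)
      = (∑ k ∈ range (n'+1+1), zco (n'+1+N+q) (n'+1) (k+1) * Fb N n' x (k+2))
        + zco (n'+1+N+q) (n'+1) 0 * Fb N n' x 1 := by
    rw [sumshift (fun k => zco (n'+1+N+q) (n'+1) k * Fb N n' x (k+1)) (n'+1)
      (by simp [zco_zero _ _ _ (show n'+1 < n'+1+1 by omega)])]
  have ext : ∀ g : ℕ → ℝ, g (n'+1) = 0 →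
      (∑ k ∈ range (n'+1), g k) = ∑ k ∈ range (n'+1+1), g k := by
    intro g hg
    rw [Finset.sum_range_succ g (n'+1), hg, add_zero]
  have T3 : ∑ k ∈ range (n'+1), zco (n'+N+q) n' k * Fb N n' x k
      = (∑ k ∈ range (n'+1+1), zco (n'+N+q) n' (k+2) * Fb N n' x (k+2))
        + zco (n'+N+q) n' 1 * Fb N n' x 1 + zco (n'+N+q) n' 0 * Fb N n' x 0 := by
    rw [ext (fun k => zco (n'+N+q) n' k * Fb N n' x k)
      (by simp [zco_zero _ _ _ (show n' < n'+1 by omega)])]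
    rw [sumshift (fun k => zco (n'+N+q) n' k * Fb N n' x k) (n'+1)
      (by simp [zco_zero _ _ _ (show n' < n'+1+1 by omega)])]
    rw [sumshift (fun k => zco (n'+N+q) n' (k+1) * Fb N n' x (k+1)) (n'+1)
      (by simp [zco_zero _ _ _ (show n' < n'+1+1+1 by omega)])]
  have T4 : ∑ k ∈ range (n'+1), zco (n'+N+q) n' k * Fb N n' x (k+1)
      = (∑ k ∈ range (n'+1+1), zco (n'+N+q) n' (k+1) * Fb N n' x (k+2))
        + zco (n'+N+q) n' 0 * Fb N n' x 1 := by
    rw [ext (fun k => zco (n'+N+q) n' k * Fb N n' x (k+1))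
      (by simp [zco_zero _ _ _ (show n' < n'+1 by omega)])]
    rw [sumshift (fun k => zco (n'+N+q) n' k * Fb N n' x (k+1)) (n'+1)
      (by simp [zco_zero _ _ _ (show n' < n'+1+1 by omega)])]
  have T5 : ∑ k ∈ range (n'+1), zco (n'+N+q) n' k * Fb N n' x (k+2)
      = ∑ k ∈ range (n'+1+1), zco (n'+N+q) n' k * Fb N n' x (k+2) := by
    rw [ext (fun k => zco (n'+N+q) n' k * Fb N n' x (k+2))
      (by simp [zco_zero _ _ _ (show n' < n'+1 by omega)])]
  have RB : (∑ k ∈ range (n'+1+1),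
        ((AA-BB)*zco (n'+1+N+q) (n'+1) (k+2) + AA*zco (n'+1+N+q) (n'+1) (k+1)
          + CC*(zco (n'+N+q) n' (k+2) + 2*zco (n'+N+q) n' (k+1) + zco (n'+N+q) n' k))
          * Fb N n' x (k+2))
      = (AA-BB) * (∑ k ∈ range (n'+1+1), zco (n'+1+N+q) (n'+1) (k+2) * Fb N n' x (k+2))
        + AA * (∑ k ∈ range (n'+1+1), zco (n'+1+N+q) (n'+1) (k+1) * Fb N n' x (k+2))
        + CC * (∑ k ∈ range (n'+1+1), zco (n'+N+q) n' (k+2) * Fb N n' x (k+2))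
        + 2*CC * (∑ k ∈ range (n'+1+1), zco (n'+N+q) n' (k+1) * Fb N n' x (k+2))
        + CC * (∑ k ∈ range (n'+1+1), zco (n'+N+q) n' k * Fb N n' x (k+2)) := by
    rw [Finset.mul_sum, Finset.mul_sum, Finset.mul_sum, Finset.mul_sum, Finset.mul_sum,
      ← Finset.sum_add_distrib, ← Finset.sum_add_distrib, ← Finset.sum_add_distrib,
      ← Finset.sum_add_distrib]
    refine Finset.sum_congr rfl fun k _ => ?_
    ring
  rw [Finset.sum_sub_distrib, Finset.sum_add_distrib, Finset.sum_add_distrib,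
    Finset.sum_add_distrib]
  simp only [← Finset.mul_sum]
  rw [T1, T2, T3, T4, T5, RB]
  ring

lemma lemKey (q N n' : ℕ) (x : ℝ) :
    (∑ k ∈ range (n'+1+1),
        ((2*((n':ℝ)+1)+N+q) * ((N:ℝ)+2*((n':ℝ)-k)) * zco (n'+1+N+q) (n'+1) (k+1)
          - 2*(2*((n':ℝ)+1)+N+q)*((k:ℝ)+2)*zco (n'+1+N+q) (n'+1) (k+2)) * Fb N n' x (k+2))
      + ((2*((n':ℝ)+1)+N+q) * ((N:ℝ)+2*((n':ℝ)+1)) * zco (n'+1+N+q) (n'+1) 0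
          - 2*(2*((n':ℝ)+1)+N+q) * zco (n'+1+N+q) (n'+1) 1) * Fb N n' x 1
    = (∑ k ∈ range (n'+1+1),
        ((((N:ℝ)*(2*((n':ℝ)+1)+N+q) + 2*((n':ℝ)+1)^2)
            - ((2*((n':ℝ)+1)+N)*(2*((n':ℝ)+1)+N+q)))*zco (n'+1+N+q) (n'+1) (k+2)
          + ((N:ℝ)*(2*((n':ℝ)+1)+N+q) + 2*((n':ℝ)+1)^2)*zco (n'+1+N+q) (n'+1) (k+1)
          + 2*((n':ℝ)+1)*(((n':ℝ)+1)+N+q)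
            *(zco (n'+N+q) n' (k+2) + 2*zco (n'+N+q) n' (k+1) + zco (n'+N+q) n' k))
          * Fb N n' x (k+2))
      + ((((N:ℝ)*(2*((n':ℝ)+1)+N+q) + 2*((n':ℝ)+1)^2)
            - ((2*((n':ℝ)+1)+N)*(2*((n':ℝ)+1)+N+q)))*zco (n'+1+N+q) (n'+1) 1
          + ((N:ℝ)*(2*((n':ℝ)+1)+N+q) + 2*((n':ℝ)+1)^2)*zco (n'+1+N+q) (n'+1) 0
          + 2*((n':ℝ)+1)*(((n':ℝ)+1)+N+q)*(zco (n'+N+q) n' 1 + 2*zco (n'+N+q) n' 0))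
          * Fb N n' x 1
      + ((((N:ℝ)*(2*((n':ℝ)+1)+N+q) + 2*((n':ℝ)+1)^2)
            - ((2*((n':ℝ)+1)+N)*(2*((n':ℝ)+1)+N+q)))*zco (n'+1+N+q) (n'+1) 0
          + 2*((n':ℝ)+1)*(((n':ℝ)+1)+N+q)*zco (n'+N+q) n' 0) * Fb N n' x 0 := by
  have hidx : n'+1+N+q-1 = n'+N+q := by omega
  have hS : (∑ k ∈ range (n'+1+1),
        ((2*((n':ℝ)+1)+N+q) * ((N:ℝ)+2*((n':ℝ)-k)) * zco (n'+1+N+q) (n'+1) (k+1)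
          - 2*(2*((n':ℝ)+1)+N+q)*((k:ℝ)+2)*zco (n'+1+N+q) (n'+1) (k+2)) * Fb N n' x (k+2))
      = ∑ k ∈ range (n'+1+1),
        ((((N:ℝ)*(2*((n':ℝ)+1)+N+q) + 2*((n':ℝ)+1)^2)
            - ((2*((n':ℝ)+1)+N)*(2*((n':ℝ)+1)+N+q)))*zco (n'+1+N+q) (n'+1) (k+2)
          + ((N:ℝ)*(2*((n':ℝ)+1)+N+q) + 2*((n':ℝ)+1)^2)*zco (n'+1+N+q) (n'+1) (k+1)
          + 2*((n':ℝ)+1)*(((n':ℝ)+1)+N+q)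
            *(zco (n'+N+q) n' (k+2) + 2*zco (n'+N+q) n' (k+1) + zco (n'+N+q) n' k))
          * Fb N n' x (k+2) := by
    refine Finset.sum_congr rfl fun k _ => ?_
    have R1 : ((n':ℝ)+1)*((n'.choose k : ℕ):ℝ)
        = (((n':ℝ)+1)-k)*(((n'+1).choose k : ℕ):ℝ) := by
      have h := realabs2 (n'+1) k (by omega)
      simp only [Nat.add_sub_cancel] at h
      push_cast at h
      linear_combination h
    have R2 : ((n':ℝ)+1)*((n'.choose (k+1) : ℕ):ℝ)
        = (((n':ℝ)+1)-k-1)*(((n'+1).choose (k+1) : ℕ):ℝ) := by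
      have h := realabs2 (n'+1) (k+1) (by omega)
      simp only [Nat.add_sub_cancel] at h
      push_cast at h
      linear_combination h
    have R3 : ((n':ℝ)+1)*((n'.choose (k+2) : ℕ):ℝ)
        = (((n':ℝ)+1)-k-2)*(((n'+1).choose (k+2) : ℕ):ℝ) := by
      have h := realabs2 (n'+1) (k+2) (by omega)
      simp only [Nat.add_sub_cancel] at h
      push_cast at h
      linear_combination h
    have R4 : ((n':ℝ)+1+N+q)*(((n'+N+q).choose k : ℕ):ℝ)
        = (((n':ℝ)+1+N+q)-k)*(((n'+1+N+q).choose k : ℕ):ℝ) := by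
      have h := realabs2 (n'+1+N+q) k (by omega)
      rw [hidx] at h
      push_cast at h
      linear_combination h
    have R5 : ((n':ℝ)+1+N+q)*(((n'+N+q).choose (k+1) : ℕ):ℝ)
        = (((n':ℝ)+1+N+q)-k-1)*(((n'+1+N+q).choose (k+1) : ℕ):ℝ) := by
      have h := realabs2 (n'+1+N+q) (k+1) (by omega)
      rw [hidx] at h
      push_cast at h
      linear_combination h
    have R6 : ((n':ℝ)+1+N+q)*(((n'+N+q).choose (k+2) : ℕ):ℝ)
        = (((n':ℝ)+1+N+q)-k-2)*(((n'+1+N+q).choose (k+2) : ℕ):ℝ) := by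
      have h := realabs2 (n'+1+N+q) (k+2) (by omega)
      rw [hidx] at h
      push_cast at h
      linear_combination h
    have R7 : ((k:ℝ)+2)*(((n'+1).choose (k+2) : ℕ):ℝ)
        = (((n':ℝ)+1)-k-1)*(((n'+1).choose (k+1) : ℕ):ℝ) := by
      have h := realabs (n'+1) (k+1)
      push_cast at h
      linear_combination h
    have R8 : ((k:ℝ)+1)*(((n'+1).choose (k+1) : ℕ):ℝ)
        = (((n':ℝ)+1)-k)*(((n'+1).choose k : ℕ):ℝ) := by
      have h := realabs (n'+1) k
      push_cast at h
      linear_combination h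
    have R9 : ((k:ℝ)+2)*(((n'+1+N+q).choose (k+2) : ℕ):ℝ)
        = (((n':ℝ)+1+N+q)-k-1)*(((n'+1+N+q).choose (k+1) : ℕ):ℝ) := by
      have h := realabs (n'+1+N+q) (k+1)
      push_cast at h
      linear_combination h
    have R10 : ((k:ℝ)+1)*(((n'+1+N+q).choose (k+1) : ℕ):ℝ)
        = (((n':ℝ)+1+N+q)-k)*(((n'+1+N+q).choose k : ℕ):ℝ) := by
      have h := realabs (n'+1+N+q) k
      push_cast at h
      linear_combination h
    have CORE := core ((n':ℝ)+1) ((n':ℝ)+1+N+q) N k ((-1:ℝ)^k)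
      (((n'+1).choose k : ℕ):ℝ) (((n'+1).choose (k+1) : ℕ):ℝ) (((n'+1).choose (k+2) : ℕ):ℝ)
      (((n'+1+N+q).choose k : ℕ):ℝ) (((n'+1+N+q).choose (k+1) : ℕ):ℝ)
      (((n'+1+N+q).choose (k+2) : ℕ):ℝ)
      ((n'.choose k : ℕ):ℝ) ((n'.choose (k+1) : ℕ):ℝ) ((n'.choose (k+2) : ℕ):ℝ)
      (((n'+N+q).choose k : ℕ):ℝ) (((n'+N+q).choose (k+1) : ℕ):ℝ)
      (((n'+N+q).choose (k+2) : ℕ):ℝ)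
      R1 R2 R3 R4 R5 R6 R7 R8 R9 R10
    have hco : ((2*((n':ℝ)+1)+N+q) * ((N:ℝ)+2*((n':ℝ)-k)) * zco (n'+1+N+q) (n'+1) (k+1)
          - 2*(2*((n':ℝ)+1)+N+q)*((k:ℝ)+2)*zco (n'+1+N+q) (n'+1) (k+2))
        = ((((N:ℝ)*(2*((n':ℝ)+1)+N+q) + 2*((n':ℝ)+1)^2)
            - ((2*((n':ℝ)+1)+N)*(2*((n':ℝ)+1)+N+q)))*zco (n'+1+N+q) (n'+1) (k+2)
          + ((N:ℝ)*(2*((n':ℝ)+1)+N+q) + 2*((n':ℝ)+1)^2)*zco (n'+1+N+q) (n'+1) (k+1)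
          + 2*((n':ℝ)+1)*(((n':ℝ)+1)+N+q)
            *(zco (n'+N+q) n' (k+2) + 2*zco (n'+N+q) n' (k+1) + zco (n'+N+q) n' k)) := by
      simp only [zco, pow_succ]
      linear_combination CORE
    rw [hco]
  rw [hS]
  have hb1 : ((2*((n':ℝ)+1)+N+q) * ((N:ℝ)+2*((n':ℝ)+1)) * zco (n'+1+N+q) (n'+1) 0
          - 2*(2*((n':ℝ)+1)+N+q) * zco (n'+1+N+q) (n'+1) 1)
      = ((((N:ℝ)*(2*((n':ℝ)+1)+N+q) + 2*((n':ℝ)+1)^2)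
            - ((2*((n':ℝ)+1)+N)*(2*((n':ℝ)+1)+N+q)))*zco (n'+1+N+q) (n'+1) 1
          + ((N:ℝ)*(2*((n':ℝ)+1)+N+q) + 2*((n':ℝ)+1)^2)*zco (n'+1+N+q) (n'+1) 0
          + 2*((n':ℝ)+1)*(((n':ℝ)+1)+N+q)*(zco (n'+N+q) n' 1 + 2*zco (n'+N+q) n' 0)) := by
    simp only [zco, Nat.choose_one_right, Nat.choose_zero_right]
    push_cast
    ring
  have hb0 : ((((N:ℝ)*(2*((n':ℝ)+1)+N+q) + 2*((n':ℝ)+1)^2)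
            - ((2*((n':ℝ)+1)+N)*(2*((n':ℝ)+1)+N+q)))*zco (n'+1+N+q) (n'+1) 0
          + 2*((n':ℝ)+1)*(((n':ℝ)+1)+N+q)*zco (n'+N+q) n' 0) = 0 := by
    simp only [zco, Nat.choose_zero_right]
    push_cast
    ring
  rw [hb1]
  linear_combination (-(Fb N n' x 0))*hb0

theorem zernike_radial_differential_relation (q N n : ℕ) (hn : 1 ≤ n)
    (x : ℝ) (hx : x ∈ Set.Ioo (0:ℝ) 1) :
    (2 * n + N + q) * (x * (1 - x ^ 2)) * deriv (zernikeR q N n) x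
      = ((N : ℝ) * (2 * n + N + q) + 2 * (n : ℝ) ^ 2
          - (2 * n + N) * (2 * n + N + q) * x ^ 2) * zernikeR q N n x
        + 2 * n * (n + N + q) * zernikeR q N (n - 1) x := by
  obtain ⟨n', rfl⟩ : ∃ n', n = n'+1 := ⟨n-1, by omega⟩
  have hA := lemA q N n' x
  have hB := lemB' ((N:ℝ)*(2*((n':ℝ)+1)+N+q) + 2*((n':ℝ)+1)^2)
      ((2*((n':ℝ)+1)+N)*(2*((n':ℝ)+1)+N+q))
      (2*((n':ℝ)+1)*(((n':ℝ)+1)+N+q)) q N n' x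
  have hK := lemKey q N n' x
  simp only [Nat.add_sub_cancel]
  rw [zernikeR_eq q N (n'+1) x, zernikeR_eq q N n' x]
  push_cast at hA hB hK ⊢
  linear_combination hA - hB + hK
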